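/- Let X, X₀ : ℝ^N → ℝ^N be vector fields which are Lipschitz with constant κ > 0 and admit complete flows U and U₀ respectively. Let c₀, C, c > 0, m ∈ ℕ with cm > κ, and let E ⊆ ℝ^N. Assume that ‖X(z) − X₀(z)‖ ≤ c₀‖z‖^m for all z ∈ ℝ^N, and that ‖U₀(t)x‖ ≤ C e^{−ct}‖x‖ for all x ∈ E and t ≥ 0. Then for all x ∈ E and all t₁ ≥ t₂ ≥ 0 one has ‖U(−t₁)(U₀(t₁)x) − U(−t₂)(U₀(t₂)x)‖ ≤ c₀ C^m e^{−(cm−κ)t₂} ‖x‖^m / (cm − κ). In particular, for each x ∈ E the limit lim_{t→+∞} U(−t)(U₀(t)x) exists. -/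

import Mathlib

open Filter Set Real
open scoped NNReal

section aux
variable {H : Type*} [NormedAddCommGroup H] [NormedSpace ℝ H]

lemma myLip {Y : H → H} {κ : ℝ} (hκ : 0 ≤ κ)
    (h : ∀ z w, ‖Y z - Y w‖ ≤ κ * ‖z - w‖) : LipschitzWith κ.toNNReal Y :=
  LipschitzWith.of_dist_le_mul fun z w => by
    simpa [dist_eq_norm, Real.coe_toNNReal κ hκ] using h z w

lemma flow_unique {Y : H → H} {κ : ℝ≥0} (hlip : LipschitzWith κ Y) {f g : ℝ → H}
    (hf : ∀ t, HasDerivAt f (Y (f t)) t) (hg : ∀ t, HasDerivAt g (Y (g t)) t)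
    (h0 : f 0 = g 0) : ∀ t, f t = g t := by
  intro t
  have h1 : (0:ℝ) ∈ Ioo (-(|t|+1)) (|t|+1) := by
    constructor <;> [nlinarith [abs_nonneg t]; nlinarith [abs_nonneg t]]
  have h2 : t ∈ Ioo (-(|t|+1)) (|t|+1) := by
    constructor <;> [nlinarith [neg_abs_le t]; nlinarith [le_abs_self t]]
  exact ODE_solution_unique_of_mem_Ioo (v := fun _ => Y) (s := fun _ => (univ : Set H))
    (fun _ _ => hlip.lipschitzOnWith) h1
    (fun τ _ => ⟨hf τ, trivial⟩) (fun τ _ => ⟨hg τ, trivial⟩) h0 h2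

lemma flow_group {Y : H → H} {κ : ℝ≥0} (hlip : LipschitzWith κ Y)
    {U : ℝ → H → H} (hU0 : ∀ x, U 0 x = x)
    (hUflow : ∀ x t, HasDerivAt (fun s => U s x) (Y (U t x)) t) :
    ∀ s t x, U (s + t) x = U s (U t x) := by
  intro s t x
  have hf : ∀ τ : ℝ, HasDerivAt (fun τ => U (τ + t) x) (Y (U (τ + t) x)) τ := by
    intro τ
    have := (hUflow x (τ + t)).scomp τ ((hasDerivAt_id τ).add_const t)
    simpa [Function.comp_def] using this
  have hg : ∀ τ : ℝ, HasDerivAt (fun τ => U τ (U t x)) (Y (U τ (U t x))) τ :=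
    fun τ => hUflow (U t x) τ
  have h0 : U (0 + t) x = U 0 (U t x) := by rw [zero_add, hU0]
  exact flow_unique hlip hf hg h0 s

lemma neg_flow_deriv {Y : H → H} {U : ℝ → H → H}
    (hUflow : ∀ x t, HasDerivAt (fun s => U s x) (Y (U t x)) t)
    (y : H) (σ : ℝ) :
    HasDerivAt (fun σ => U (-σ) y) (-(Y (U (-σ) y))) σ := by
  have := (hUflow y (-σ)).scomp σ (hasDerivAt_neg σ)
  simpa [Function.comp_def] using this

lemma backward_lip {Y : H → H} {κ : ℝ≥0}
    (hlipneg : LipschitzWith κ (fun z => -(Y z)))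
    {U : ℝ → H → H} (hU0 : ∀ x, U 0 x = x)
    (hUflow : ∀ x t, HasDerivAt (fun s => U s x) (Y (U t x)) t)
    {T : ℝ} (hT : 0 ≤ T) (p q : H) :
    dist (U (-T) p) (U (-T) q) ≤ dist p q * Real.exp (κ * T) := by
  have hf : ∀ τ ∈ Ico (0:ℝ) T, HasDerivWithinAt (fun τ => U (-τ) p)
      (-(Y (U (-τ) p))) (Ici τ) τ := fun τ _ => (neg_flow_deriv hUflow p τ).hasDerivWithinAt
  have hg : ∀ τ ∈ Ico (0:ℝ) T, HasDerivWithinAt (fun τ => U (-τ) q)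
      (-(Y (U (-τ) q))) (Ici τ) τ := fun τ _ => (neg_flow_deriv hUflow q τ).hasDerivWithinAt
  have hcf : ContinuousOn (fun τ => U (-τ) p) (Icc 0 T) :=
    fun τ _ => (neg_flow_deriv hUflow p τ).continuousAt.continuousWithinAt
  have hcg : ContinuousOn (fun τ => U (-τ) q) (Icc 0 T) :=
    fun τ _ => (neg_flow_deriv hUflow q τ).continuousAt.continuousWithinAt
  have := dist_le_of_trajectories_ODE (v := fun _ z => -(Y z)) (δ := dist p q)
    (fun _ => hlipneg) hcf hf hcg hg (by simp [hU0]) T ⟨hT, le_rfl⟩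
  simpa using this

lemma gronwall_var {f f' : ℝ → H} {K : ℝ} (hK : 0 ≤ K) {b : ℝ}
    {B B' ε : ℝ → ℝ}
    (hf : ∀ t, HasDerivAt f (f' t) t)
    (hB : ∀ t, HasDerivAt B (B' t) t)
    (hBeq : ∀ t, B' t = K * B t + ε t)
    (h0 : ‖f 0‖ ≤ B 0)
    (bound : ∀ t ∈ Icc (0:ℝ) b, ‖f' t‖ ≤ K * ‖f t‖ + ε t) :
    ∀ t ∈ Icc (0:ℝ) b, ‖f t‖ ≤ B t := by
  intro t ht
  have H : ∀ η > (0:ℝ), ‖f t‖ ≤ B t + η * Real.exp ((K+1)*t) := by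
    intro η hη
    have hBd : ∀ τ : ℝ, HasDerivAt (fun τ => B τ + η * Real.exp ((K+1)*τ))
        (B' τ + η * (Real.exp ((K+1)*τ) * ((K+1)*1))) τ := by
      intro τ
      exact (hB τ).add ((((hasDerivAt_id τ).const_mul (K+1)).exp).const_mul η)
    have key := image_norm_le_of_norm_deriv_right_lt_deriv_boundary
      (f := f) (f' := f') (a := 0) (b := b)
      (fun τ _ => (hf τ).continuousAt.continuousWithinAt)
      (fun τ _ => (hf τ).hasDerivWithinAt)
      (B := fun τ => B τ + η * Real.exp ((K+1)*τ))
      (B' := fun τ => B' τ + η * (Real.exp ((K+1)*τ) * ((K+1)*1)))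
      (by simpa using by linarith [h0] : ‖f 0‖ ≤ B 0 + η * Real.exp ((K+1)*0))
      hBd
      (fun τ hτ hfB => by
        have he : 0 < Real.exp ((K+1)*τ) := Real.exp_pos _
        have h1 := bound τ (Ico_subset_Icc_self hτ)
        have h1' : ‖f' τ‖ ≤ K * (B τ + η * Real.exp ((K+1)*τ)) + ε τ := by
          rw [hfB] at h1; exact h1
        show ‖f' τ‖ < B' τ + η * (Real.exp ((K+1)*τ) * ((K+1)*1))
        rw [hBeq τ]
        nlinarith [h1', he, hK, hη])
      ht
    exact key
  refine le_of_forall_pos_le_add fun δ hδ => ?_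
  have hexp : 0 < Real.exp ((K+1)*t) := Real.exp_pos _
  have := H (δ / Real.exp ((K+1)*t)) (by positivity)
  rwa [div_mul_cancel₀ _ hexp.ne'] at this


lemma myBderiv (A k1 k2 d : ℝ) (σ : ℝ) :
    HasDerivAt (fun σ => A * (Real.exp (k1*σ) - Real.exp (k2*σ)) / d)
      (A * (k1*Real.exp (k1*σ) - k2*Real.exp (k2*σ)) / d) σ := by
  have h1 : HasDerivAt (fun σ : ℝ => Real.exp (k1*σ)) (Real.exp (k1*σ) * (k1*1)) σ :=
    ((hasDerivAt_id σ).const_mul k1).exp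
  have h2 : HasDerivAt (fun σ : ℝ => Real.exp (k2*σ)) (Real.exp (k2*σ) * (k2*1)) σ :=
    ((hasDerivAt_id σ).const_mul k2).exp
  have := ((h1.sub h2).const_mul A).div_const d
  exact this.congr_deriv (by ring)

open Filter

/-- **Cauchy estimate for the wave-operator limit.**
If `X, X₀` are `κ`-Lipschitz vector fields with complete flows `U, U₀`, the difference
`X - X₀` is bounded by `c₀‖z‖^m` with `c m > κ`, and the flow `U₀` contracts exponentially
on a set `E`, then `t ↦ U(-t)(U₀(t)x)` satisfies the stated Cauchy estimate for
`t₁ ≥ t₂ ≥ 0`, and in particular converges as `t → ∞` for each `x ∈ E`. -/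
theorem wave_operator_cauchy_estimate {N : ℕ}
    (X X₀ : EuclideanSpace ℝ (Fin N) → EuclideanSpace ℝ (Fin N))
    (κ : ℝ) (hκ : 0 < κ)
    (hXlip : ∀ z w : EuclideanSpace ℝ (Fin N), ‖X z - X w‖ ≤ κ * ‖z - w‖)
    (hX₀lip : ∀ z w : EuclideanSpace ℝ (Fin N), ‖X₀ z - X₀ w‖ ≤ κ * ‖z - w‖)
    (U U₀ : ℝ → EuclideanSpace ℝ (Fin N) → EuclideanSpace ℝ (Fin N))
    (hU0 : ∀ x, U 0 x = x)
    (hUflow : ∀ x t, HasDerivAt (fun s => U s x) (X (U t x)) t)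
    (hU₀0 : ∀ x, U₀ 0 x = x)
    (hU₀flow : ∀ x t, HasDerivAt (fun s => U₀ s x) (X₀ (U₀ t x)) t)
    (c₀ C c : ℝ) (hc₀ : 0 < c₀) (hC : 0 < C) (hc : 0 < c)
    (m : ℕ) (hcm : κ < c * m)
    (E : Set (EuclideanSpace ℝ (Fin N)))
    (hdiff : ∀ z : EuclideanSpace ℝ (Fin N), ‖X z - X₀ z‖ ≤ c₀ * ‖z‖ ^ m)
    (hdecay : ∀ x ∈ E, ∀ t : ℝ, 0 ≤ t → ‖U₀ t x‖ ≤ C * Real.exp (-c * t) * ‖x‖) :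
    (∀ x ∈ E, ∀ t₁ t₂ : ℝ, 0 ≤ t₂ → t₂ ≤ t₁ →
      ‖U (-t₁) (U₀ t₁ x) - U (-t₂) (U₀ t₂ x)‖ ≤
        c₀ * C ^ m * Real.exp (-(c * m - κ) * t₂) * ‖x‖ ^ m / (c * m - κ)) ∧
    (∀ x ∈ E, ∃ L : EuclideanSpace ℝ (Fin N),
      Tendsto (fun t => U (-t) (U₀ t x)) atTop (nhds L)) := by
  have ha' : (0:ℝ) < c * m - κ := by linarith
  have hKX : LipschitzWith κ.toNNReal X := myLip hκ.le hXlip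
  have hKX₀ : LipschitzWith κ.toNNReal X₀ := myLip hκ.le hX₀lip
  have hKXneg : LipschitzWith κ.toNNReal (fun z => -(X z)) := by
    refine myLip hκ.le fun z w => ?_
    calc ‖-(X z) - -(X w)‖ = ‖X w - X z‖ := by rw [neg_sub_neg]
    _ = ‖X z - X w‖ := norm_sub_rev _ _
    _ ≤ κ * ‖z - w‖ := hXlip z w
  have hUgrp := flow_group hKX hU0 hUflow
  have hU₀grp := flow_group hKX₀ hU₀0 hU₀flow
  have est : ∀ x ∈ E, ∀ t₁ t₂ : ℝ, 0 ≤ t₂ → t₂ ≤ t₁ →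
      ‖U (-t₁) (U₀ t₁ x) - U (-t₂) (U₀ t₂ x)‖ ≤
        c₀ * C ^ m * Real.exp (-(c * m - κ) * t₂) * ‖x‖ ^ m / (c * m - κ) := by
    intro x hx t₁ t₂ ht₂ ht
    have ht₁ : (0:ℝ) ≤ t₁ := le_trans ht₂ ht
    set y := U₀ t₁ x with hy
    set A := c₀ * C ^ m * ‖x‖ ^ m * Real.exp (-(c * ↑m * t₁)) with hA
    have hA0 : 0 ≤ A := by positivity
    have hFd : ∀ σ : ℝ, HasDerivAt (fun σ => U (-σ) y) (-(X (U (-σ) y))) σ :=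
      neg_flow_deriv hUflow y
    have hGd : ∀ σ : ℝ, HasDerivAt (fun σ => U₀ (-σ) y) (-(X₀ (U₀ (-σ) y))) σ :=
      neg_flow_deriv hU₀flow y
    have hGval : ∀ σ : ℝ, U₀ (-σ) y = U₀ (t₁ - σ) x := by
      intro σ
      rw [hy, ← hU₀grp]
      congr 1; ring
    have hBd : ∀ σ : ℝ, HasDerivAt
        (fun σ => A * (Real.exp (c*↑m*σ) - Real.exp (κ*σ)) / (c*↑m-κ))
        (A * (c*↑m*Real.exp (c*↑m*σ) - κ*Real.exp (κ*σ)) / (c*↑m-κ)) σ :=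
      fun σ => myBderiv A (c*↑m) κ (c*↑m-κ) σ
    have key := gronwall_var (K := κ) hκ.le (b := t₁ - t₂)
      (f := fun σ => U (-σ) y - U₀ (-σ) y)
      (f' := fun σ => -(X (U (-σ) y)) - -(X₀ (U₀ (-σ) y)))
      (B := fun σ => A * (Real.exp (c*↑m*σ) - Real.exp (κ*σ)) / (c*↑m-κ))
      (B' := fun σ => A * (c*↑m*Real.exp (c*↑m*σ) - κ*Real.exp (κ*σ)) / (c*↑m-κ))
      (ε := fun σ => A * Real.exp (c*↑m*σ))
      (fun σ => (hFd σ).sub (hGd σ)) hBd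
      (fun σ => by
        show A * (c*↑m*Real.exp (c*↑m*σ) - κ*Real.exp (κ*σ)) / (c*↑m-κ)
          = κ * (A * (Real.exp (c*↑m*σ) - Real.exp (κ*σ)) / (c*↑m-κ)) + A * Real.exp (c*↑m*σ)
        field_simp
        ring)
      (by simp [hU0, hU₀0])
      (fun σ hσ => by
        show ‖-(X (U (-σ) y)) - -(X₀ (U₀ (-σ) y))‖
          ≤ κ * ‖U (-σ) y - U₀ (-σ) y‖ + A * Real.exp (c*↑m*σ)
        have hts : (0:ℝ) ≤ t₁ - σ := by
          have := hσ.2; linarith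
        have hq : ‖U₀ (-σ) y‖ ≤ C * Real.exp (-c*(t₁-σ)) * ‖x‖ := by
          rw [hGval σ]
          exact hdecay x hx (t₁ - σ) (by linarith [hσ.2, ht₂])
        have hqp : ‖U₀ (-σ) y‖ ^ m ≤ (C * Real.exp (-c*(t₁-σ)) * ‖x‖) ^ m :=
          pow_le_pow_left₀ (norm_nonneg _) hq m
        have he : Real.exp (-(c*↑m*t₁)) * Real.exp (c*↑m*σ)
            = Real.exp ((m:ℝ) * (-c*(t₁-σ))) := by
          rw [← Real.exp_add]; congr 1; ring
        have h2 : c₀ * ‖U₀ (-σ) y‖ ^ m ≤ A * Real.exp (c*↑m*σ) := by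
          calc c₀ * ‖U₀ (-σ) y‖ ^ m
              ≤ c₀ * (C * Real.exp (-c*(t₁-σ)) * ‖x‖) ^ m := by
                exact mul_le_mul_of_nonneg_left hqp hc₀.le
            _ = A * Real.exp (c*↑m*σ) := by
                rw [mul_pow, mul_pow, ← Real.exp_nat_mul, hA, ← he]
                ring
        calc ‖-(X (U (-σ) y)) - -(X₀ (U₀ (-σ) y))‖
            = ‖X₀ (U₀ (-σ) y) - X (U (-σ) y)‖ := by rw [neg_sub_neg]
          _ = ‖X (U (-σ) y) - X₀ (U₀ (-σ) y)‖ := norm_sub_rev _ _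
          _ ≤ ‖X (U (-σ) y) - X (U₀ (-σ) y)‖ + ‖X (U₀ (-σ) y) - X₀ (U₀ (-σ) y)‖ :=
              norm_sub_le_norm_sub_add_norm_sub _ _ _
          _ ≤ κ * ‖U (-σ) y - U₀ (-σ) y‖ + c₀ * ‖U₀ (-σ) y‖ ^ m :=
              add_le_add (hXlip _ _) (hdiff _)
          _ ≤ κ * ‖U (-σ) y - U₀ (-σ) y‖ + A * Real.exp (c*↑m*σ) := by linarith)
      (t₁ - t₂) ⟨by linarith, le_rfl⟩
    have e2 : U₀ (-(t₁-t₂)) y = U₀ t₂ x := by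
      rw [hy, ← hU₀grp]; congr 1; ring
    have e1 : U (-t₁) (U₀ t₁ x) = U (-t₂) (U (-(t₁-t₂)) y) := by
      rw [hy, ← hUgrp]; congr 1; ring
    have lipstep := backward_lip hKXneg hU0 hUflow ht₂ (U (-(t₁-t₂)) y) (U₀ t₂ x)
    have hkey : A * Real.exp (c*↑m*(t₁-t₂)) * Real.exp (κ*t₂)
        = c₀ * C ^ m * Real.exp (-(c * ↑m - κ) * t₂) * ‖x‖ ^ m := by
      have h6 : Real.exp (-(c*↑m*t₁)) * Real.exp (c*↑m*(t₁-t₂)) * Real.exp (κ*t₂)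
          = Real.exp (-(c * ↑m - κ) * t₂) := by
        rw [← Real.exp_add, ← Real.exp_add]; congr 1; ring
      calc A * Real.exp (c*↑m*(t₁-t₂)) * Real.exp (κ*t₂)
          = c₀ * C ^ m * ‖x‖ ^ m *
            (Real.exp (-(c*↑m*t₁)) * Real.exp (c*↑m*(t₁-t₂)) * Real.exp (κ*t₂)) := by
            rw [hA]; ring
        _ = c₀ * C ^ m * Real.exp (-(c * ↑m - κ) * t₂) * ‖x‖ ^ m := by rw [h6]; ring
    calc ‖U (-t₁) (U₀ t₁ x) - U (-t₂) (U₀ t₂ x)‖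
        = dist (U (-t₂) (U (-(t₁-t₂)) y)) (U (-t₂) (U₀ t₂ x)) := by
          rw [e1, dist_eq_norm]
      _ ≤ dist (U (-(t₁-t₂)) y) (U₀ t₂ x) * Real.exp (κ * t₂) := by
          simpa [Real.coe_toNNReal _ hκ.le] using lipstep
      _ = ‖U (-(t₁-t₂)) y - U₀ (-(t₁-t₂)) y‖ * Real.exp (κ * t₂) := by
          rw [dist_eq_norm, e2]
      _ ≤ (A * (Real.exp (c*↑m*(t₁-t₂)) - Real.exp (κ*(t₁-t₂))) / (c*↑m-κ))
            * Real.exp (κ * t₂) := by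
          exact mul_le_mul_of_nonneg_right key (Real.exp_pos _).le
      _ ≤ c₀ * C ^ m * Real.exp (-(c * ↑m - κ) * t₂) * ‖x‖ ^ m / (c * ↑m - κ) := by
          rw [div_mul_eq_mul_div]
          rw [div_le_div_iff₀ ha' ha']
          have h5 : 0 ≤ A * Real.exp (κ*(t₁-t₂)) * Real.exp (κ*t₂) := by positivity
          nlinarith [hkey, h5, ha']
  refine ⟨est, fun x hx => ?_⟩
  apply cauchySeq_tendsto_of_complete
  rw [Metric.cauchySeq_iff']
  intro ε hε
  have htend : Tendsto (fun T : ℝ =>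
      c₀ * C ^ m * Real.exp (-(c * ↑m - κ) * T) * ‖x‖ ^ m / (c * ↑m - κ)) atTop (nhds 0) := by
    have h1 : Tendsto (fun T : ℝ => (c*↑m-κ) * T) atTop atTop :=
      Tendsto.const_mul_atTop ha' tendsto_id
    have h2 : Tendsto (fun T : ℝ => Real.exp ((c*↑m-κ)*T)) atTop atTop :=
      Real.tendsto_exp_atTop.comp h1
    have h3 : Tendsto (fun T : ℝ => (Real.exp ((c*↑m-κ)*T))⁻¹) atTop (nhds 0) :=
      h2.inv_tendsto_atTop
    have h4 : (fun T : ℝ => c₀ * C ^ m * Real.exp (-(c * ↑m - κ) * T) * ‖x‖ ^ m / (c * ↑m - κ))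
        = fun T => (c₀ * C ^ m * ‖x‖ ^ m / (c * ↑m - κ)) * (Real.exp ((c*↑m-κ)*T))⁻¹ := by
      funext T
      rw [neg_mul, Real.exp_neg]
      ring
    rw [h4]
    simpa using h3.const_mul (c₀ * C ^ m * ‖x‖ ^ m / (c * ↑m - κ))
  obtain ⟨T, hT0, hTlt⟩ : ∃ T : ℝ, 0 ≤ T ∧
      c₀ * C ^ m * Real.exp (-(c * ↑m - κ) * T) * ‖x‖ ^ m / (c * ↑m - κ) < ε := by
    obtain ⟨T, h1, h2⟩ := ((htend.eventually (gt_mem_nhds hε)).and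
      (eventually_ge_atTop (0:ℝ))).exists
    exact ⟨T, h2, h1⟩
  refine ⟨T, fun n hn => ?_⟩
  rw [dist_eq_norm]
  exact lt_of_le_of_lt (est x hx n T hT0 hn) hTlt
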